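/- arXiv:2102.08521 — 3 statements merged into one kernel-verified Lean document; each statement's English description precedes it below -/
import Mathlib

section
/- For each 2 ≤ k ≤ n, the function J_k = (-1)^{k-1} ((k-1)/k!) (z_{n-1})^k + Σ_{a=2}^{k} ((-1)^{k-a}/(k-a)!) z_{n-a} (z_n)^{a-1} (z_{n-1})^{k-a} on J^n(ℝ,ℝ) is a t-independent first integral of the truncated total derivative, i.e. D_t J_k = 0 where D_t = ∂_t + Σ_{i=0}^{n-1} z_{i+1} ∂_{z_i}. In particular J_2 = -(1/2)(z_{n-1})^2 + z_{n-2} z_n satisfies D_t J_2 = 0. -/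
open Finset

/-- Partial derivative of a function on `ℝ^m` in the `i`-th coordinate direction. -/
noncomputable def pderiv' (m : ℕ) (i : Fin m) (f : (Fin m → ℝ) → ℝ) : (Fin m → ℝ) → ℝ :=
  fun x => fderiv ℝ f x (Pi.single i 1)

/-- Index of the jet coordinate `z_j` among the coordinates `(t, z_0, …, z_n)` of
`J^n(ℝ,ℝ) ≅ ℝ^{n+2}`; coordinate `0` is `t` and coordinate `j+1` is `z_j` (for `j ≤ n`). -/
def zidx (n j : ℕ) : Fin (n + 2) := ⟨min (j + 1) (n + 1), Nat.lt_succ_of_le (min_le_right _ _)⟩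

/-- The truncated total derivative `D_t f = ∂f/∂t + ∑_{i=0}^{n-1} z_{i+1} ∂f/∂z_i`. -/
noncomputable def Dt (n : ℕ) (f : (Fin (n + 2) → ℝ) → ℝ) : (Fin (n + 2) → ℝ) → ℝ :=
  fun x => pderiv' (n + 2) 0 f x +
    ∑ i ∈ Finset.range n, x (zidx n (i + 1)) * pderiv' (n + 2) (zidx n i) f x

/-- The `t`-independent first integral
`J_k = (-1)^{k-1} ((k-1)/k!) z_{n-1}^k + ∑_{a=2}^{k} ((-1)^{k-a}/(k-a)!) z_{n-a} z_n^{a-1} z_{n-1}^{k-a}`. -/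
noncomputable def Jfun (n k : ℕ) : (Fin (n + 2) → ℝ) → ℝ :=
  fun x => (-1 : ℝ) ^ (k - 1) * (((k : ℝ) - 1) / (Nat.factorial k : ℝ)) * (x (zidx n (n - 1))) ^ k +
    ∑ a ∈ Finset.Icc 2 k, ((-1 : ℝ) ^ (k - a) / (Nat.factorial (k - a) : ℝ)) *
      x (zidx n (n - a)) * (x (zidx n n)) ^ (a - 1) * (x (zidx n (n - 1))) ^ (k - a)

lemma diff_coord {m : ℕ} (j : Fin m) : Differentiable ℝ (fun x : Fin m → ℝ => x j) :=
  (ContinuousLinearMap.proj j : (Fin m → ℝ) →L[ℝ] ℝ).differentiable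

lemma pderiv'_coord {m : ℕ} (i j : Fin m) (x : Fin m → ℝ) :
    pderiv' m i (fun y => y j) x = if j = i then 1 else 0 := by
  have h : fderiv ℝ (fun y : Fin m → ℝ => y j) x = ContinuousLinearMap.proj j :=
    (ContinuousLinearMap.proj j : (Fin m → ℝ) →L[ℝ] ℝ).fderiv
  simp [pderiv', h, ContinuousLinearMap.proj_apply, Pi.single_apply]

lemma pderiv'_const {m : ℕ} (i : Fin m) (c : ℝ) (x) :
    pderiv' m i (fun _ => c) x = 0 := by simp [pderiv']

lemma pderiv'_add {m : ℕ} (i : Fin m) {f g : (Fin m → ℝ) → ℝ} (x)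
    (hf : DifferentiableAt ℝ f x) (hg : DifferentiableAt ℝ g x) :
    pderiv' m i (fun y => f y + g y) x = pderiv' m i f x + pderiv' m i g x := by
  simp [pderiv', fderiv_fun_add hf hg]

lemma pderiv'_mul {m : ℕ} (i : Fin m) {f g : (Fin m → ℝ) → ℝ} (x)
    (hf : DifferentiableAt ℝ f x) (hg : DifferentiableAt ℝ g x) :
    pderiv' m i (fun y => f y * g y) x = pderiv' m i f x * g x + f x * pderiv' m i g x := by
  simp [pderiv', fderiv_fun_mul hf hg]; ring

lemma pderiv'_const_mul {m : ℕ} (i : Fin m) {f : (Fin m → ℝ) → ℝ} (c : ℝ) (x)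
    (hf : DifferentiableAt ℝ f x) :
    pderiv' m i (fun y => c * f y) x = c * pderiv' m i f x := by
  simp [pderiv', fderiv_const_mul hf]

lemma pderiv'_sum {m : ℕ} (i : Fin m) {α : Type*} (s : Finset α)
    (f : α → (Fin m → ℝ) → ℝ) (x) (hf : ∀ a ∈ s, DifferentiableAt ℝ (f a) x) :
    pderiv' m i (fun y => ∑ a ∈ s, f a y) x = ∑ a ∈ s, pderiv' m i (f a) x := by
  simp [pderiv', fderiv_fun_sum hf]

lemma pderiv'_pow {m : ℕ} (i : Fin m) (j : Fin m) (k : ℕ) (x) :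
    pderiv' m i (fun y => (y j) ^ k) x
      = (k : ℝ) * (x j) ^ (k - 1) * (if j = i then 1 else 0) := by
  induction k with
  | zero => simp [pderiv'_const]
  | succ k ih =>
    have : (fun y : Fin m → ℝ => (y j) ^ (k+1)) = fun y => (y j) ^ k * y j := by
      funext y; ring
    rw [this, pderiv'_mul i x (((diff_coord j).differentiableAt).fun_pow k)
      ((diff_coord j).differentiableAt), ih, pderiv'_coord]
    rcases Nat.eq_zero_or_pos k with hk | hk
    · subst hk; simp
    · have h1 : k - 1 + 1 = k := Nat.succ_pred_eq_of_pos hk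
      by_cases hji : j = i <;> simp [hji, pow_succ]
      rw [← h1, pow_succ]; push_cast; ring

lemma diff_mono {m : ℕ} (j1 j2 j3 : Fin m) (c : ℝ) (p q : ℕ) :
    Differentiable ℝ (fun y : Fin m → ℝ => c * y j1 * (y j2) ^ p * (y j3) ^ q) :=
  (((differentiable_const c).mul (diff_coord j1)).mul ((diff_coord j2).pow p)).mul
    ((diff_coord j3).pow q)

lemma pderiv'_mono {m : ℕ} (i j1 j2 j3 : Fin m) (c : ℝ) (p q : ℕ) (x) :
    pderiv' m i (fun y => c * y j1 * (y j2) ^ p * (y j3) ^ q) x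
      = c * (if j1 = i then 1 else 0) * (x j2) ^ p * (x j3) ^ q
      + c * x j1 * ((p : ℝ) * (x j2) ^ (p - 1) * (if j2 = i then 1 else 0)) * (x j3) ^ q
      + c * x j1 * (x j2) ^ p * ((q : ℝ) * (x j3) ^ (q - 1) * (if j3 = i then 1 else 0)) := by
  rw [pderiv'_mul i x
      ((((differentiable_const c).fun_mul (diff_coord j1)).fun_mul ((diff_coord j2).fun_pow p)).differentiableAt)
      (((diff_coord j3).fun_pow q).differentiableAt),
    pderiv'_mul i x
      (((differentiable_const c).fun_mul (diff_coord j1)).differentiableAt)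
      (((diff_coord j2).fun_pow p).differentiableAt),
    pderiv'_const_mul i c x ((diff_coord j1).differentiableAt),
    pderiv'_coord, pderiv'_pow, pderiv'_pow]
  ring

lemma pderiv'_cpow {m : ℕ} (i j : Fin m) (c : ℝ) (k : ℕ) (x) :
    pderiv' m i (fun y => c * (y j) ^ k) x
      = c * ((k : ℝ) * (x j) ^ (k - 1) * (if j = i then 1 else 0)) := by
  rw [pderiv'_const_mul i c x (((diff_coord j).fun_pow k).differentiableAt), pderiv'_pow]

lemma zidx_ne_zero (n j : ℕ) : zidx n j ≠ 0 := by
  simp only [zidx, Ne, Fin.ext_iff, Fin.val_zero]; omega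

lemma zidx_inj {n i j : ℕ} (hi : i ≤ n) (hj : j ≤ n) : zidx n i = zidx n j ↔ i = j := by
  simp only [zidx, Fin.ext_iff]; omega

open Finset in

lemma pderiv'_Jfun (n k : ℕ) (i : Fin (n + 2)) (x : Fin (n + 2) → ℝ) :
    pderiv' (n + 2) i (Jfun n k) x =
      (-1 : ℝ) ^ (k - 1) * (((k : ℝ) - 1) / (Nat.factorial k : ℝ)) *
        ((k : ℝ) * (x (zidx n (n - 1))) ^ (k - 1) * (if zidx n (n - 1) = i then 1 else 0))
      + ∑ a ∈ Icc 2 k,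
        ( ((-1 : ℝ) ^ (k - a) / (Nat.factorial (k - a) : ℝ)) * (if zidx n (n - a) = i then 1 else 0)
            * (x (zidx n n)) ^ (a - 1) * (x (zidx n (n - 1))) ^ (k - a)
        + ((-1 : ℝ) ^ (k - a) / (Nat.factorial (k - a) : ℝ)) * x (zidx n (n - a))
            * (((a - 1 : ℕ) : ℝ) * (x (zidx n n)) ^ (a - 1 - 1) * (if zidx n n = i then 1 else 0))
            * (x (zidx n (n - 1))) ^ (k - a)
        + ((-1 : ℝ) ^ (k - a) / (Nat.factorial (k - a) : ℝ)) * x (zidx n (n - a))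
            * (x (zidx n n)) ^ (a - 1)
            * (((k - a : ℕ) : ℝ) * (x (zidx n (n - 1))) ^ (k - a - 1)
                * (if zidx n (n - 1) = i then 1 else 0)) ) := by
  have hF : DifferentiableAt ℝ (fun y : Fin (n + 2) → ℝ =>
      (-1 : ℝ) ^ (k - 1) * (((k : ℝ) - 1) / (Nat.factorial k : ℝ)) * (y (zidx n (n - 1))) ^ k) x :=
    ((differentiable_const _).mul ((diff_coord _).pow k)).differentiableAt
  have hG : ∀ a ∈ Icc 2 k, DifferentiableAt ℝ (fun y : Fin (n + 2) → ℝ =>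
      ((-1 : ℝ) ^ (k - a) / (Nat.factorial (k - a) : ℝ)) *
        y (zidx n (n - a)) * (y (zidx n n)) ^ (a - 1) * (y (zidx n (n - 1))) ^ (k - a)) x :=
    fun a _ => (diff_mono _ _ _ _ _ _).differentiableAt
  unfold Jfun
  rw [pderiv'_add i x hF (DifferentiableAt.fun_sum hG), pderiv'_cpow,
    pderiv'_sum i _ _ x hG]
  exact congrArg _ (Finset.sum_congr rfl fun a _ => pderiv'_mono _ _ _ _ _ _ _ _)
open Finset

lemma sum_Icc_telescope (g : ℕ → ℝ) (k : ℕ) (hk : 2 ≤ k) :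
    ∑ a ∈ Icc 2 k, (g a - g (a - 1)) = g k - g 1 := by
  induction k with
  | zero => omega
  | succ k ih =>
    rcases Nat.lt_or_ge k 2 with h | h
    · have hk1 : k = 1 := by omega
      subst hk1; simp
    · rw [Finset.sum_Icc_succ_top (by omega : 2 ≤ k + 1), ih h]
      simp only [Nat.add_sub_cancel]; ring

lemma telescope (k : ℕ) (hk : 2 ≤ k) (u v : ℝ) (w : ℕ → ℝ) (hw : w 1 = u) :
    v * ((-1 : ℝ) ^ (k - 1) * (((k : ℝ) - 1) / (Nat.factorial k : ℝ)) * ((k : ℝ) * u ^ (k - 1)))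
    + ∑ a ∈ Icc 2 k,
        ( w (a - 1) * ((-1 : ℝ) ^ (k - a) / (Nat.factorial (k - a) : ℝ) * v ^ (a - 1) * u ^ (k - a))
        + v * ((-1 : ℝ) ^ (k - a) / (Nat.factorial (k - a) : ℝ) * w a * v ^ (a - 1) *
            (((k - a : ℕ) : ℝ) * u ^ (k - a - 1))) ) = 0 := by
  set g : ℕ → ℝ := fun a =>
    (-1 : ℝ) ^ (k - a) * (((k - a : ℕ) : ℝ) / (Nat.factorial (k - a) : ℝ)) * w a * v ^ a *
      u ^ (k - a - 1) with hg
  have hsummand : ∀ a ∈ Icc 2 k,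
      ( w (a - 1) * ((-1 : ℝ) ^ (k - a) / (Nat.factorial (k - a) : ℝ) * v ^ (a - 1) * u ^ (k - a))
      + v * ((-1 : ℝ) ^ (k - a) / (Nat.factorial (k - a) : ℝ) * w a * v ^ (a - 1) *
          (((k - a : ℕ) : ℝ) * u ^ (k - a - 1))) ) = g a - g (a - 1) := by
    intro a ha
    rw [mem_Icc] at ha
    obtain ⟨b, rfl⟩ : ∃ b, a = b + 2 := ⟨a - 2, by omega⟩
    obtain ⟨d, rfl⟩ : ∃ d, k = b + 2 + d := ⟨k - (b + 2), by omega⟩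
    have e1 : b + 2 + d - (b + 2) = d := by omega
    have e2 : b + 2 - 1 = b + 1 := by omega
    have e3 : b + 2 + d - (b + 1) = d + 1 := by omega
    have e4 : b + 2 + d - (b + 1) - 1 = d := by omega
    simp only [hg, e1, e2, e3, e4]
    have hf : ((Nat.factorial (d + 1) : ℕ) : ℝ) = ((d : ℝ) + 1) * (Nat.factorial d : ℝ) := by
      rw [Nat.factorial_succ]; push_cast; ring
    have hne : (Nat.factorial d : ℝ) ≠ 0 := Nat.cast_ne_zero.mpr (Nat.factorial_ne_zero d)
    have hne1 : ((d : ℝ) + 1) ≠ 0 := by positivity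
    rw [hf, pow_succ (-1 : ℝ) d, pow_succ v (b + 1)]
    push_cast
    field_simp
    ring
  rw [Finset.sum_congr rfl hsummand, sum_Icc_telescope g k hk]
  have hgk : g k = 0 := by simp [hg]
  obtain ⟨m, rfl⟩ : ∃ m, k = m + 2 := ⟨k - 2, by omega⟩
  have e1 : m + 2 - 1 = m + 1 := by omega
  have e2 : m + 2 - 1 - 1 = m := by omega
  simp only [hgk, hg, e1, e2, hw, zero_sub]
  have hf2 : ((Nat.factorial (m + 2) : ℕ) : ℝ)
      = ((m : ℝ) + 2) * (((m : ℝ) + 1) * (Nat.factorial m : ℝ)) := by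
    rw [Nat.factorial_succ, Nat.factorial_succ]; push_cast; ring
  have hf1 : ((Nat.factorial (m + 1) : ℕ) : ℝ) = ((m : ℝ) + 1) * (Nat.factorial m : ℝ) := by
    rw [Nat.factorial_succ]; push_cast; ring
  have hne : (Nat.factorial m : ℝ) ≠ 0 := Nat.cast_ne_zero.mpr (Nat.factorial_ne_zero m)
  rw [hf2, hf1, pow_succ u m]
  push_cast
  field_simp
  ring_nf
  simp

lemma Dt_Jfun (n k : ℕ) (hk2 : 2 ≤ k) (hkn : k ≤ n) (x : Fin (n + 2) → ℝ) :
    Dt n (Jfun n k) x =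
      x (zidx n n) * ((-1 : ℝ) ^ (k - 1) * (((k : ℝ) - 1) / (Nat.factorial k : ℝ)) *
        ((k : ℝ) * (x (zidx n (n - 1))) ^ (k - 1)))
      + ∑ a ∈ Icc 2 k,
        ( x (zidx n (n - a + 1)) * ((-1 : ℝ) ^ (k - a) / (Nat.factorial (k - a) : ℝ)
            * (x (zidx n n)) ^ (a - 1) * (x (zidx n (n - 1))) ^ (k - a))
        + x (zidx n n) * ((-1 : ℝ) ^ (k - a) / (Nat.factorial (k - a) : ℝ)
            * x (zidx n (n - a)) * (x (zidx n n)) ^ (a - 1) *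
            (((k - a : ℕ) : ℝ) * (x (zidx n (n - 1))) ^ (k - a - 1))) ) := by
  have hn2 : 2 ≤ n := le_trans hk2 hkn
  have e0 : pderiv' (n + 2) 0 (Jfun n k) x = 0 := by
    rw [pderiv'_Jfun]
    simp [zidx_ne_zero]
  unfold Dt
  rw [e0, zero_add]
  have ei : ∀ i ∈ range n, x (zidx n (i + 1)) * pderiv' (n + 2) (zidx n i) (Jfun n k) x =
      (if n - 1 = i then x (zidx n (i + 1)) * ((-1 : ℝ) ^ (k - 1) *
          (((k : ℝ) - 1) / (Nat.factorial k : ℝ)) *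
          ((k : ℝ) * (x (zidx n (n - 1))) ^ (k - 1))) else 0)
      + ∑ a ∈ Icc 2 k,
        ( (if n - a = i then x (zidx n (i + 1)) * ((-1 : ℝ) ^ (k - a) / (Nat.factorial (k - a) : ℝ)
              * (x (zidx n n)) ^ (a - 1) * (x (zidx n (n - 1))) ^ (k - a)) else 0)
        + (if n - 1 = i then x (zidx n (i + 1)) * ((-1 : ℝ) ^ (k - a) / (Nat.factorial (k - a) : ℝ)
              * x (zidx n (n - a)) * (x (zidx n n)) ^ (a - 1) *
              (((k - a : ℕ) : ℝ) * (x (zidx n (n - 1))) ^ (k - a - 1))) else 0) ) := by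
    intro i hi
    have hi' : i < n := mem_range.mp hi
    have hni : ¬ (n = i) := by omega
    rw [pderiv'_Jfun]
    simp only [zidx_inj (Nat.sub_le n 1) (le_of_lt hi'), zidx_inj (Nat.sub_le n _) (le_of_lt hi'),
      zidx_inj (le_refl n) (le_of_lt hi'), hni, if_false]
    rw [mul_add, Finset.mul_sum]
    congr 1
    · by_cases h : n - 1 = i <;> simp [h] <;> ring
    · refine Finset.sum_congr rfl fun a ha => ?_
      by_cases h1 : n - a = i <;> by_cases h2 : n - 1 = i <;> simp [h1, h2] <;> ring
  rw [Finset.sum_congr rfl ei, Finset.sum_add_distrib,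
    Finset.sum_ite_eq (range n) (n - 1), if_pos (mem_range.mpr (by omega)),
    Finset.sum_comm]
  have hn1 : n - 1 + 1 = n := by omega
  rw [hn1]
  congr 1
  refine Finset.sum_congr rfl fun a ha => ?_
  rw [mem_Icc] at ha
  rw [Finset.sum_add_distrib, Finset.sum_ite_eq (range n) (n - a),
    if_pos (mem_range.mpr (by omega)), Finset.sum_ite_eq (range n) (n - 1),
    if_pos (mem_range.mpr (by omega)), hn1]

/-- For `2 ≤ k ≤ n`, `D_t J_k = 0`; in particular
`J_2 = -(1/2) z_{n-1}² + z_{n-2} z_n` satisfies `D_t J_2 = 0`. -/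
theorem stmt_3 (n : ℕ) :
    (∀ k : ℕ, 2 ≤ k → k ≤ n → ∀ x : Fin (n + 2) → ℝ, Dt n (Jfun n k) x = 0) ∧
    (2 ≤ n → ∀ x : Fin (n + 2) → ℝ,
      Dt n (fun y => -(1 / 2 : ℝ) * (y (zidx n (n - 1))) ^ 2 +
        y (zidx n (n - 2)) * y (zidx n n)) x = 0) := by
  have part1 : ∀ k : ℕ, 2 ≤ k → k ≤ n → ∀ x : Fin (n + 2) → ℝ, Dt n (Jfun n k) x = 0 := by
    intro k hk2 hkn x
    rw [Dt_Jfun n k hk2 hkn x]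
    have hre : ∀ a ∈ Icc 2 k,
        ( x (zidx n (n - a + 1)) * ((-1 : ℝ) ^ (k - a) / (Nat.factorial (k - a) : ℝ)
            * (x (zidx n n)) ^ (a - 1) * (x (zidx n (n - 1))) ^ (k - a))
        + x (zidx n n) * ((-1 : ℝ) ^ (k - a) / (Nat.factorial (k - a) : ℝ)
            * x (zidx n (n - a)) * (x (zidx n n)) ^ (a - 1) *
            (((k - a : ℕ) : ℝ) * (x (zidx n (n - 1))) ^ (k - a - 1))) )
        = ( x (zidx n (n - (a - 1))) * ((-1 : ℝ) ^ (k - a) / (Nat.factorial (k - a) : ℝ)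
            * (x (zidx n n)) ^ (a - 1) * (x (zidx n (n - 1))) ^ (k - a))
        + x (zidx n n) * ((-1 : ℝ) ^ (k - a) / (Nat.factorial (k - a) : ℝ)
            * x (zidx n (n - a)) * (x (zidx n n)) ^ (a - 1) *
            (((k - a : ℕ) : ℝ) * (x (zidx n (n - 1))) ^ (k - a - 1))) ) := by
      intro a ha
      rw [mem_Icc] at ha
      have : n - a + 1 = n - (a - 1) := by omega
      rw [this]
    rw [Finset.sum_congr rfl hre]
    exact telescope k hk2 (x (zidx n (n - 1))) (x (zidx n n))
      (fun a => x (zidx n (n - a))) rfl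
  refine ⟨part1, fun hn x => ?_⟩
  have hfun : (fun y : Fin (n + 2) → ℝ => -(1 / 2 : ℝ) * (y (zidx n (n - 1))) ^ 2 +
      y (zidx n (n - 2)) * y (zidx n n)) = Jfun n 2 := by
    funext y
    rw [Jfun, Finset.Icc_self, Finset.sum_singleton]
    norm_num [Nat.factorial]
  rw [hfun]
  exact part1 2 le_rfl hn x
end

section
/- Let D_t be the truncated total derivative on J^n(ℝ,ℝ) and, for τ ≤ n, define the truncated Euler operator E_τ(f) = Σ_{j=0}^{τ} (-1)^j D_t^j (∂f/∂z_j). If g is a smooth function on ℝ^{n+2} and f = D_t g, then E_τ(f) = (-1)^τ D_t^{τ+1}(∂g/∂z_τ). In particular, if ∂g/∂z_τ lies in the kernel of D_t^{τ+1}, then E_τ(D_t g) = 0. -/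
open Finset

/-- The truncated Euler operator `E_τ(f) = ∑_{j=0}^{τ} (-1)^j D_t^j(∂f/∂z_j)`. -/
noncomputable def EulerT (n τ : ℕ) (f : (Fin (n + 2) → ℝ) → ℝ) : (Fin (n + 2) → ℝ) → ℝ :=
  fun x => ∑ j ∈ Finset.range (τ + 1),
    (-1 : ℝ) ^ j * ((Dt n)^[j] (pderiv' (n + 2) (zidx n j) f)) x

/-! ### Auxiliary lemmas -/

lemma fderiv_smooth' {m : ℕ} {f : (Fin m → ℝ) → ℝ} (hf : ContDiff ℝ (⊤ : ℕ∞) f) :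
    ContDiff ℝ (⊤ : ℕ∞) (fderiv ℝ f) := hf.fderiv_right (by norm_cast)

lemma pd_contDiff {m : ℕ} (i : Fin m) {f : (Fin m → ℝ) → ℝ} (hf : ContDiff ℝ (⊤ : ℕ∞) f) :
    ContDiff ℝ (⊤ : ℕ∞) (pderiv' m i f) :=
  (fderiv_smooth' hf).clm_apply contDiff_const

lemma coord_contDiff {m : ℕ} (k : Fin m) : ContDiff ℝ (⊤ : ℕ∞) (fun x : Fin m → ℝ => x k) :=
  (ContinuousLinearMap.proj k : (Fin m → ℝ) →L[ℝ] ℝ).contDiff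

lemma pd_comm {m : ℕ} (i k : Fin m) {f : (Fin m → ℝ) → ℝ} (hf : ContDiff ℝ (⊤ : ℕ∞) f)
    (x : Fin m → ℝ) : pderiv' m i (pderiv' m k f) x = pderiv' m k (pderiv' m i f) x := by
  have hd : DifferentiableAt ℝ (fderiv ℝ f) x :=
    ((fderiv_smooth' hf).differentiable (by norm_cast)) x
  have e : ∀ v w : Fin m → ℝ,
      fderiv ℝ (fun y => fderiv ℝ f y v) x w = fderiv ℝ (fderiv ℝ f) x w v := by
    intro v w
    rw [fderiv_clm_apply hd (differentiableAt_const v)]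
    simp
  have hsymm := (hf.contDiffAt (x := x)).isSymmSndFDerivAt (by rw [minSmoothness_of_isRCLikeNormedField]; exact WithTop.coe_le_coe.mpr (le_top : (2 : ℕ∞) ≤ ⊤))
  show fderiv ℝ (fun y => fderiv ℝ f y (Pi.single k 1)) x (Pi.single i 1) =
      fderiv ℝ (fun y => fderiv ℝ f y (Pi.single i 1)) x (Pi.single k 1)
  rw [e, e, hsymm]

lemma pd_add {m : ℕ} (i : Fin m) {f g : (Fin m → ℝ) → ℝ} {x : Fin m → ℝ}
    (hf : DifferentiableAt ℝ f x) (hg : DifferentiableAt ℝ g x) :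
    pderiv' m i (fun y => f y + g y) x = pderiv' m i f x + pderiv' m i g x := by
  simp [pderiv', fderiv_fun_add hf hg]

lemma pd_sum {m : ℕ} {ι : Type*} (i : Fin m) {s : Finset ι} {F : ι → (Fin m → ℝ) → ℝ}
    {x : Fin m → ℝ} (h : ∀ j ∈ s, DifferentiableAt ℝ (F j) x) :
    pderiv' m i (fun y => ∑ j ∈ s, F j y) x = ∑ j ∈ s, pderiv' m i (F j) x := by
  simp [pderiv', fderiv_fun_sum h]

lemma pd_mul_coord {m : ℕ} (i k : Fin m) {h : (Fin m → ℝ) → ℝ} {x : Fin m → ℝ}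
    (hh : DifferentiableAt ℝ h x) :
    pderiv' m i (fun y => y k * h y) x
      = (Pi.single i 1 : Fin m → ℝ) k * h x + x k * pderiv' m i h x := by
  have hc : DifferentiableAt ℝ (fun y : Fin m → ℝ => y k) x :=
    (ContinuousLinearMap.proj k : (Fin m → ℝ) →L[ℝ] ℝ).differentiableAt
  have hfd : fderiv ℝ (fun y : Fin m → ℝ => y k) x
      = (ContinuousLinearMap.proj k : (Fin m → ℝ) →L[ℝ] ℝ) :=
    (ContinuousLinearMap.proj k : (Fin m → ℝ) →L[ℝ] ℝ).fderiv
  simp only [pderiv']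
  rw [fderiv_fun_mul hc hh]
  simp [hfd]
  ring

lemma Dt_contDiff {n : ℕ} {f : (Fin (n + 2) → ℝ) → ℝ} (hf : ContDiff ℝ (⊤ : ℕ∞) f) :
    ContDiff ℝ (⊤ : ℕ∞) (Dt n f) := by
  unfold Dt
  exact (pd_contDiff _ hf).add
    (ContDiff.sum fun i _ => (coord_contDiff _).mul (pd_contDiff _ hf))

lemma Dt_add {n : ℕ} {f g : (Fin (n + 2) → ℝ) → ℝ} (hf : ContDiff ℝ (⊤ : ℕ∞) f)
    (hg : ContDiff ℝ (⊤ : ℕ∞) g) (x : Fin (n + 2) → ℝ) :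
    Dt n (fun y => f y + g y) x = Dt n f x + Dt n g x := by
  have hf' := hf.differentiable (by norm_cast) x
  have hg' := hg.differentiable (by norm_cast) x
  simp only [Dt, pd_add _ hf' hg', mul_add, Finset.sum_add_distrib]
  ring

lemma Dt_iter_add {n : ℕ} (j : ℕ) : ∀ {f g : (Fin (n + 2) → ℝ) → ℝ},
    ContDiff ℝ (⊤ : ℕ∞) f → ContDiff ℝ (⊤ : ℕ∞) g → ∀ x,
    (Dt n)^[j] (fun y => f y + g y) x = (Dt n)^[j] f x + (Dt n)^[j] g x := by
  induction j with
  | zero => intro f g _ _ x; simp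
  | succ j ih =>
    intro f g hf hg x
    rw [Function.iterate_succ_apply, Function.iterate_succ_apply, Function.iterate_succ_apply]
    rw [show Dt n (fun y => f y + g y) = fun y => Dt n f y + Dt n g y from
      funext (Dt_add hf hg)]
    exact ih (Dt_contDiff hf) (Dt_contDiff hg) x

lemma pd_Dt {n : ℕ} (p : Fin (n + 2)) {f : (Fin (n + 2) → ℝ) → ℝ}
    (hf : ContDiff ℝ (⊤ : ℕ∞) f) (x : Fin (n + 2) → ℝ) :
    pderiv' (n + 2) p (Dt n f) x = Dt n (pderiv' (n + 2) p f) x +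
      ∑ i ∈ Finset.range n,
        (Pi.single p (1 : ℝ) : Fin (n + 2) → ℝ) (zidx n (i + 1)) *
          pderiv' (n + 2) (zidx n i) f x := by
  have hB : ∀ i : ℕ, ContDiff ℝ (⊤ : ℕ∞)
      (fun y : Fin (n + 2) → ℝ => y (zidx n (i + 1)) * pderiv' (n + 2) (zidx n i) f y) :=
    fun i => (coord_contDiff _).mul (pd_contDiff _ hf)
  have hA : DifferentiableAt ℝ (pderiv' (n + 2) 0 f) x :=
    (pd_contDiff _ hf).differentiable (by norm_cast) x
  have hsum : DifferentiableAt ℝ (fun y : Fin (n + 2) → ℝ =>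
      ∑ i ∈ Finset.range n, y (zidx n (i + 1)) * pderiv' (n + 2) (zidx n i) f y) x :=
    (ContDiff.sum fun i _ => hB i).differentiable (by norm_cast) x
  have step1 : pderiv' (n + 2) p (Dt n f) x
      = pderiv' (n + 2) p (pderiv' (n + 2) 0 f) x +
        pderiv' (n + 2) p (fun y : Fin (n + 2) → ℝ =>
          ∑ i ∈ Finset.range n, y (zidx n (i + 1)) * pderiv' (n + 2) (zidx n i) f y) x :=
    pd_add p hA hsum
  rw [step1,
    pd_sum p (fun i _ => ((hB i).differentiable (by norm_cast) x)),
    pd_comm p 0 hf x]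
  have term : ∀ i ∈ Finset.range n,
      pderiv' (n + 2) p (fun y : Fin (n + 2) → ℝ =>
        y (zidx n (i + 1)) * pderiv' (n + 2) (zidx n i) f y) x
      = (Pi.single p 1 : Fin (n + 2) → ℝ) (zidx n (i + 1)) * pderiv' (n + 2) (zidx n i) f x +
        x (zidx n (i + 1)) * pderiv' (n + 2) (zidx n i) (pderiv' (n + 2) p f) x := by
    intro i _
    rw [pd_mul_coord p (zidx n (i + 1)) ((pd_contDiff _ hf).differentiable (by norm_cast) x),
      pd_comm p (zidx n i) hf x]
  rw [Finset.sum_congr rfl term, Finset.sum_add_distrib]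
  simp only [Dt]
  ring

lemma pd_Dt_zero {n : ℕ} {f : (Fin (n + 2) → ℝ) → ℝ} (hf : ContDiff ℝ (⊤ : ℕ∞) f)
    (x : Fin (n + 2) → ℝ) :
    pderiv' (n + 2) (zidx n 0) (Dt n f) x = Dt n (pderiv' (n + 2) (zidx n 0) f) x := by
  rw [pd_Dt (zidx n 0) hf x]
  have hz : ∀ i ∈ Finset.range n,
      (Pi.single (zidx n 0) (1 : ℝ) : Fin (n + 2) → ℝ) (zidx n (i + 1)) *
        pderiv' (n + 2) (zidx n i) f x = 0 := by
    intro i hi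
    have hin : i < n := Finset.mem_range.mp hi
    have hne : zidx n (i + 1) ≠ zidx n 0 := by
      apply Fin.ne_of_val_ne
      show min (i + 1 + 1) (n + 1) ≠ min (0 + 1) (n + 1)
      rw [Nat.min_eq_left (by omega), Nat.min_eq_left (by omega)]
      omega
    rw [Pi.single_apply, if_neg hne, zero_mul]
  rw [Finset.sum_eq_zero hz, add_zero]

lemma pd_Dt_succ {n : ℕ} (j : ℕ) (hj : j + 1 ≤ n) {f : (Fin (n + 2) → ℝ) → ℝ}
    (hf : ContDiff ℝ (⊤ : ℕ∞) f) (x : Fin (n + 2) → ℝ) :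
    pderiv' (n + 2) (zidx n (j + 1)) (Dt n f) x
      = Dt n (pderiv' (n + 2) (zidx n (j + 1)) f) x + pderiv' (n + 2) (zidx n j) f x := by
  rw [pd_Dt (zidx n (j + 1)) hf x]
  congr 1
  rw [Finset.sum_eq_single j]
  · rw [Pi.single_eq_same, one_mul]
  · intro i hi hij
    have hin : i < n := Finset.mem_range.mp hi
    have hne : zidx n (i + 1) ≠ zidx n (j + 1) := by
      apply Fin.ne_of_val_ne
      show min (i + 1 + 1) (n + 1) ≠ min (j + 1 + 1) (n + 1)
      rw [Nat.min_eq_left (by omega), Nat.min_eq_left (by omega)]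
      omega
    rw [Pi.single_apply, if_neg hne, zero_mul]
  · intro hj'
    exact absurd (Finset.mem_range.mpr (by omega)) hj'

lemma key_lemma (n : ℕ) {g : (Fin (n + 2) → ℝ) → ℝ} (hg : ContDiff ℝ (⊤ : ℕ∞) g) :
    ∀ τ, τ ≤ n → ∀ x, EulerT n τ (Dt n g) x
      = (-1 : ℝ) ^ τ * ((Dt n)^[τ + 1] (pderiv' (n + 2) (zidx n τ) g)) x := by
  intro τ
  induction τ with
  | zero =>
    intro _ x
    simp only [EulerT, zero_add, Finset.range_one, Finset.sum_singleton, pow_zero, one_mul,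
      Function.iterate_zero, id_eq, Function.iterate_one]
    exact pd_Dt_zero hg x
  | succ τ ih =>
    intro hτ x
    have hτn : τ ≤ n := by omega
    have e1 : EulerT n (τ + 1) (Dt n g) x = EulerT n τ (Dt n g) x +
        (-1 : ℝ) ^ (τ + 1) *
          ((Dt n)^[τ + 1] (pderiv' (n + 2) (zidx n (τ + 1)) (Dt n g))) x := by
      simp [EulerT, Finset.sum_range_succ]
    have hstep : pderiv' (n + 2) (zidx n (τ + 1)) (Dt n g)
        = fun y => Dt n (pderiv' (n + 2) (zidx n (τ + 1)) g) y +
            pderiv' (n + 2) (zidx n τ) g y :=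
      funext (pd_Dt_succ τ hτ hg)
    have e2 : ((Dt n)^[τ + 1] (fun y => Dt n (pderiv' (n + 2) (zidx n (τ + 1)) g) y +
          pderiv' (n + 2) (zidx n τ) g y)) x
        = ((Dt n)^[τ + 1] (Dt n (pderiv' (n + 2) (zidx n (τ + 1)) g))) x +
          ((Dt n)^[τ + 1] (pderiv' (n + 2) (zidx n τ) g)) x :=
      Dt_iter_add (τ + 1) (Dt_contDiff (pd_contDiff _ hg)) (pd_contDiff _ hg) x
    rw [e1, ih hτn x, hstep, e2, ← Function.iterate_succ_apply]
    ring

/-- If `f = D_t g` then `E_τ(f) = (-1)^τ D_t^{τ+1}(∂g/∂z_τ)`; in particular, if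
`∂g/∂z_τ ∈ ker D_t^{τ+1}`, then `E_τ(D_t g) = 0`. -/
theorem stmt_5 (n τ : ℕ) (hτ : τ ≤ n) (g : (Fin (n + 2) → ℝ) → ℝ)
    (hg : ContDiff ℝ (⊤ : ℕ∞) g) :
    (∀ x : Fin (n + 2) → ℝ,
      EulerT n τ (Dt n g) x = (-1 : ℝ) ^ τ * ((Dt n)^[τ + 1] (pderiv' (n + 2) (zidx n τ) g)) x) ∧
    ((∀ x, ((Dt n)^[τ + 1] (pderiv' (n + 2) (zidx n τ) g)) x = 0) →
      ∀ x, EulerT n τ (Dt n g) x = 0) := by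
  refine ⟨key_lemma n hg τ hτ, fun h x => ?_⟩
  rw [key_lemma n hg τ hτ x, h x, mul_zero]
end

section
/- (Kalman rank condition, sufficiency) Let A be an n×n real matrix and B an n×m real matrix, and suppose the n×(nm) controllability matrix [B, AB, A²B, …, A^{n-1}B] has rank n. Then the linear control system ẋ = Ax + Bu is controllable: for any p, q ∈ ℝⁿ and any t₀ < t₁ there exists a continuous control u : [t₀,t₁] → ℝᵐ whose corresponding solution satisfies x(t₀) = p and x(t₁) = q. -/
open NormedSpace MeasureTheory Set

attribute [local instance] Matrix.linftyOpSemiNormedRing Matrix.linftyOpNormedRing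
  Matrix.linftyOpNormedAlgebra

namespace Stmt13Aux

variable {n m : ℕ}

noncomputable def expM (A : Matrix (Fin n) (Fin n) ℝ) (t : ℝ) : Matrix (Fin n) (Fin n) ℝ :=
  exp (t • A)

lemma expM_add (A : Matrix (Fin n) (Fin n) ℝ) (s t : ℝ) :
    expM A s * expM A t = expM A (s + t) := by
  rw [expM, expM, expM, add_smul,
    Matrix.exp_add_of_commute _ _ (((Commute.refl A).smul_left s).smul_right t)]

lemma expM_zero (A : Matrix (Fin n) (Fin n) ℝ) : expM A 0 = 1 := by
  simp [expM, exp_zero]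

lemma expM_neg_cancel (A : Matrix (Fin n) (Fin n) ℝ) (t : ℝ) :
    expM A t * expM A (-t) = 1 := by
  rw [expM_add]; simp [expM_zero]

lemma commute_expM (A : Matrix (Fin n) (Fin n) ℝ) (t : ℝ) :
    A * expM A t = expM A t * A :=
  (((Commute.refl A).smul_right t).exp_right).eq

/-- evaluation of a matrix entry as a continuous linear map -/
noncomputable def entryCLM (i j : Fin n) : Matrix (Fin n) (Fin n) ℝ →L[ℝ] ℝ :=
  LinearMap.toContinuousLinearMap
    { toFun := fun X => X i j
      map_add' := fun _ _ => rfl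
      map_smul' := fun _ _ => rfl }

lemma expM_hasDerivAt (A : Matrix (Fin n) (Fin n) ℝ) (t : ℝ) :
    HasDerivAt (expM A) (A * expM A t) t :=
  hasDerivAt_exp_smul_const' A t

lemma expM_entry_hasDerivAt (A : Matrix (Fin n) (Fin n) ℝ) (c d t : ℝ) (i j : Fin n) :
    HasDerivAt (fun s => expM A (c + d * s) i j) (d * (A * expM A (c + d * t)) i j) t := by
  have h1 : HasDerivAt (fun s : ℝ => c + d * s) d t := by
    simpa using ((hasDerivAt_id t).const_mul d).const_add c
  have h2 := (expM_hasDerivAt A (c + d * t)).scomp t h1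
  have h3 := (entryCLM i j).hasFDerivAt.comp_hasDerivAt t h2
  exact h3

lemma expM_entry_continuous (A : Matrix (Fin n) (Fin n) ℝ) (c d : ℝ) (i j : Fin n) :
    Continuous fun s => expM A (c + d * s) i j :=
  continuous_iff_continuousAt.2 fun t => (expM_entry_hasDerivAt A c d t i j).continuousAt

lemma expM_entry_hasDerivAt_sub (A : Matrix (Fin n) (Fin n) ℝ) (c t : ℝ) (i j : Fin n) :
    HasDerivAt (fun s => expM A (c - s) i j) (-((A * expM A (c - t)) i j)) t := by
  have := expM_entry_hasDerivAt A c (-1) t i j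
  simp only [neg_one_mul, ← sub_eq_add_neg] at this
  exact this

lemma expM_entry_continuous_sub (A : Matrix (Fin n) (Fin n) ℝ) (c : ℝ) (i j : Fin n) :
    Continuous fun s => expM A (c - s) i j := by
  have := expM_entry_continuous A c (-1) i j
  simpa only [neg_one_mul, ← sub_eq_add_neg] using this

lemma expM_entry_continuous_neg (A : Matrix (Fin n) (Fin n) ℝ) (i j : Fin n) :
    Continuous fun s => expM A (-s) i j := by
  simpa using expM_entry_continuous_sub A 0 i j

lemma continuous_mulVec {k l : ℕ} {M : ℝ → Matrix (Fin k) (Fin l) ℝ}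
    (hM : ∀ i j, Continuous fun s => M s i j) {v : ℝ → Fin l → ℝ} (hv : Continuous v) :
    Continuous fun s => (M s).mulVec (v s) := by
  apply continuous_pi
  intro i
  show Continuous fun s => ∑ j, M s i j * v s j
  exact continuous_finset_sum _ fun j _ => (hM i j).mul ((continuous_apply j).comp hv)

lemma hasDerivAt_mulVec {k l : ℕ} {M : ℝ → Matrix (Fin k) (Fin l) ℝ}
    {M' : Matrix (Fin k) (Fin l) ℝ} {v : ℝ → Fin l → ℝ} {v' : Fin l → ℝ} {t : ℝ}
    (hM : ∀ i j, HasDerivAt (fun s => M s i j) (M' i j) t) (hv : HasDerivAt v v' t) :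
    HasDerivAt (fun s => (M s).mulVec (v s)) (M'.mulVec (v t) + (M t).mulVec v') t := by
  rw [hasDerivAt_pi]
  intro i
  have h : HasDerivAt (fun s => ∑ j, M s i j * v s j)
      (∑ j, (M' i j * v t j + M t i j * v' j)) t :=
    HasDerivAt.fun_sum fun j _ => (hM i j).mul ((hasDerivAt_pi.1 hv) j)
  have heq : (∑ j, (M' i j * v t j + M t i j * v' j)) =
      (M'.mulVec (v t) + (M t).mulVec v') i := by
    show _ = M'.mulVec (v t) i + (M t).mulVec v' i
    rw [Finset.sum_add_distrib]
    rfl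
  rw [heq] at h
  exact h

/-- matrix-vector multiplication as a continuous linear map -/
noncomputable def mvCLM {k l : ℕ} (M : Matrix (Fin k) (Fin l) ℝ) :
    (Fin l → ℝ) →L[ℝ] (Fin k → ℝ) :=
  LinearMap.toContinuousLinearMap M.mulVecLin

/-- dot product with a fixed vector as a continuous linear map -/
noncomputable def dpCLM {k : ℕ} (v : Fin k → ℝ) : (Fin k → ℝ) →L[ℝ] ℝ :=
  LinearMap.toContinuousLinearMap
    { toFun := fun w => dotProduct v w
      map_add' := fun a b => by simp [dotProduct_add]
      map_smul' := fun c a => by simp [dotProduct_smul] }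

lemma dot_mulVec {k l : Type*} [Fintype k] [Fintype l] (v : k → ℝ) (M : Matrix k l ℝ) (x : l → ℝ) :
    dotProduct v (M.mulVec x) = dotProduct (M.transpose.mulVec v) x := by
  rw [Matrix.dotProduct_mulVec, Matrix.mulVec_transpose]

lemma kalman_ker {A : Matrix (Fin n) (Fin n) ℝ} {B : Matrix (Fin n) (Fin m) ℝ}
    (hrank : (Matrix.of fun (i : Fin n) (jk : Fin n × Fin m) =>
        (A ^ (jk.1 : ℕ) * B) i jk.2).rank = n)
    (w : Fin n → ℝ) (hw : ∀ k : ℕ, (A ^ k * B).transpose.mulVec w = 0) : w = 0 := by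
  classical
  set K : Matrix (Fin n) (Fin n × Fin m) ℝ :=
    Matrix.of fun (i : Fin n) (jk : Fin n × Fin m) => (A ^ (jk.1 : ℕ) * B) i jk.2 with hK
  have hsurj : Function.Surjective K.mulVecLin := by
    rw [← LinearMap.range_eq_top]
    apply Submodule.eq_top_of_finrank_eq
    have : K.rank = Module.finrank ℝ (LinearMap.range K.mulVecLin) := rfl
    rw [← this, hrank, Module.finrank_fin_fun]
  obtain ⟨y, hy⟩ := hsurj w
  have hKt : K.transpose.mulVec w = 0 := by
    funext jk
    have h1 := congrFun (hw jk.1) jk.2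
    show ∑ i, K.transpose jk i * w i = 0
    have h2 : ((A ^ (jk.1 : ℕ) * B).transpose.mulVec w) jk.2 =
        ∑ i, (A ^ (jk.1 : ℕ) * B).transpose jk.2 i * w i := rfl
    rw [h1] at h2
    have h3 : ∑ i, K.transpose jk i * w i =
        ∑ i, (A ^ (jk.1 : ℕ) * B).transpose jk.2 i * w i := by
      apply Finset.sum_congr rfl
      intro i _
      simp [hK, Matrix.transpose_apply]
    rw [h3, ← h2]
    rfl
  have hdot : dotProduct w w = 0 := by
    have hyw : K.mulVec y = w := hy
    calc dotProduct w w = dotProduct w (K.mulVec y) := by rw [hyw]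
      _ = dotProduct (K.transpose.mulVec w) y := dot_mulVec w K y
      _ = 0 := by rw [hKt]; simp [zero_dotProduct]
  exact dotProduct_self_eq_zero.mp hdot

end Stmt13Aux

open Stmt13Aux

/-- Kalman rank condition, sufficiency: if the controllability matrix
`[B, AB, …, A^{n-1}B]` has rank `n`, then the linear system `ẋ = Ax + Bu` is controllable:
any state `p` can be steered to any state `q` over any time interval `[t₀, t₁]` by a
continuous control. -/
theorem stmt_13 (n m : ℕ) (A : Matrix (Fin n) (Fin n) ℝ) (B : Matrix (Fin n) (Fin m) ℝ)
    (hrank : (Matrix.of fun (i : Fin n) (jk : Fin n × Fin m) =>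
        (A ^ (jk.1 : ℕ) * B) i jk.2).rank = n) :
    ∀ (p q : Fin n → ℝ) (t0 t1 : ℝ), t0 < t1 →
      ∃ u : ℝ → (Fin m → ℝ), Continuous u ∧
        ∃ x : ℝ → (Fin n → ℝ),
          x t0 = p ∧ x t1 = q ∧
          ∀ t, HasDerivAt x (A.mulVec (x t) + B.mulVec (u t)) t := by
  intro p q t0 t1 ht
  classical
  set E : ℝ → Matrix (Fin n) (Fin n) ℝ := expM A with hEdef
  -- the integrand defining the controllability Gramian applied to a vector
  set F : (Fin n → ℝ) → ℝ → (Fin n → ℝ) := fun v s =>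
    (E (t1 - s)).mulVec (B.mulVec (B.transpose.mulVec ((E (t1 - s)).transpose.mulVec v)))
    with hFdef
  -- continuity facts
  have hg_cont : ∀ v : Fin n → ℝ,
      Continuous fun s => B.transpose.mulVec ((E (t1 - s)).transpose.mulVec v) := by
    intro v
    exact continuous_mulVec (M := fun _ => B.transpose) (fun i j => continuous_const)
      (continuous_mulVec (M := fun s => (E (t1 - s)).transpose)
        (fun i j => expM_entry_continuous_sub A t1 j i) continuous_const)
  have hF_cont : ∀ v : Fin n → ℝ, Continuous (F v) := by
    intro v
    exact continuous_mulVec (M := fun s => E (t1 - s))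
      (fun i j => expM_entry_continuous_sub A t1 i j)
      (continuous_mulVec (M := fun _ => B) (fun i j => continuous_const) (hg_cont v))
  have hF_int : ∀ v : Fin n → ℝ, IntervalIntegrable (F v) volume t0 t1 := fun v =>
    (hF_cont v).intervalIntegrable t0 t1
  -- the Gramian as a linear map
  set wfun : (Fin n → ℝ) → (Fin n → ℝ) := fun v => ∫ s in t0..t1, F v s with hwfun
  have hadd : ∀ v w, wfun (v + w) = wfun v + wfun w := by
    intro v w
    have : ∀ s, F (v + w) s = F v s + F w s := by
      intro s
      simp only [hFdef, Matrix.mulVec_add]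
    rw [hwfun]
    simp only [this]
    exact intervalIntegral.integral_add (hF_int v) (hF_int w)
  have hsmul : ∀ (c : ℝ) v, wfun (c • v) = c • wfun v := by
    intro c v
    have : ∀ s, F (c • v) s = c • F v s := by
      intro s
      simp only [hFdef, Matrix.mulVec_smul]
    rw [hwfun]
    simp only [this]
    exact intervalIntegral.integral_smul c _
  set W : (Fin n → ℝ) →ₗ[ℝ] (Fin n → ℝ) := IsLinearMap.mk' wfun ⟨hadd, hsmul⟩ with hW
  -- W is injective
  have hker : ∀ v, W v = 0 → v = 0 := by
    intro v hv0
    -- the scalar integrand is the squared norm of g s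
    have hpt : ∀ s, dpCLM v (F v s) =
        dotProduct (B.transpose.mulVec ((E (t1 - s)).transpose.mulVec v))
          (B.transpose.mulVec ((E (t1 - s)).transpose.mulVec v)) := by
      intro s
      have h1 : dpCLM v (F v s) = dotProduct v (F v s) := by
        simp [dpCLM]
      rw [h1, hFdef]
      rw [dot_mulVec, dot_mulVec]
    have hint0 : (∫ s in t0..t1,
        dotProduct (B.transpose.mulVec ((E (t1 - s)).transpose.mulVec v))
          (B.transpose.mulVec ((E (t1 - s)).transpose.mulVec v))) = 0 := by
      have hcomm := (dpCLM v).intervalIntegral_comp_comm (hF_int v)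
      have : (∫ s in t0..t1, dpCLM v (F v s)) = dpCLM v (wfun v) := hcomm
      have hv0' : wfun v = 0 := hv0
      rw [hv0'] at this
      simp only [map_zero] at this
      calc (∫ s in t0..t1,
          dotProduct (B.transpose.mulVec ((E (t1 - s)).transpose.mulVec v))
            (B.transpose.mulVec ((E (t1 - s)).transpose.mulVec v)))
          = ∫ s in t0..t1, dpCLM v (F v s) := by
            apply intervalIntegral.integral_congr
            intro s _
            exact (hpt s).symm
        _ = 0 := this
    -- hence the control kernel vanishes on (t0, t1)
    have hsq_cont : Continuous fun s =>
        dotProduct (B.transpose.mulVec ((E (t1 - s)).transpose.mulVec v))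
          (B.transpose.mulVec ((E (t1 - s)).transpose.mulVec v)) := by
      have h := hg_cont v
      show Continuous fun s => ∑ j, (B.transpose.mulVec ((E (t1 - s)).transpose.mulVec v)) j *
        (B.transpose.mulVec ((E (t1 - s)).transpose.mulVec v)) j
      exact continuous_finset_sum _ fun j _ =>
        ((continuous_apply j).comp h).mul ((continuous_apply j).comp h)
    have hae : (fun s =>
        dotProduct (B.transpose.mulVec ((E (t1 - s)).transpose.mulVec v))
          (B.transpose.mulVec ((E (t1 - s)).transpose.mulVec v)))
          =ᵐ[volume.restrict (Ioc t0 t1)] 0 := by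
      refine (intervalIntegral.integral_eq_zero_iff_of_le_of_nonneg_ae ht.le ?_ ?_).mp hint0
      · filter_upwards with s
        exact Finset.sum_nonneg fun j _ => mul_self_nonneg _
      · exact (hsq_cont.intervalIntegrable t0 t1)
    have haeIoo : (fun s =>
        dotProduct (B.transpose.mulVec ((E (t1 - s)).transpose.mulVec v))
          (B.transpose.mulVec ((E (t1 - s)).transpose.mulVec v)))
          =ᵐ[volume.restrict (Ioo t0 t1)] 0 :=
      ae_restrict_of_ae_restrict_of_subset Ioo_subset_Ioc_self hae
    have hEqOn := Measure.eqOn_Ioo_of_ae_eq volume haeIoo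
      hsq_cont.continuousOn continuous_const.continuousOn
    have hg0 : ∀ s ∈ Ioo t0 t1,
        B.transpose.mulVec ((E (t1 - s)).transpose.mulVec v) = 0 := by
      intro s hs
      exact dotProduct_self_eq_zero.mp (hEqOn hs)
    -- induction: all iterated derivatives vanish
    have hGk : ∀ k : ℕ, ∀ s ∈ Ioo t0 t1,
        (A ^ k * B).transpose.mulVec ((E (t1 - s)).transpose.mulVec v) = 0 := by
      intro k
      induction k with
      | zero =>
        intro s hs
        simpa [pow_zero, one_mul] using hg0 s hs
      | succ k ih =>
        intro s hs
        -- derivative of the k-th function at s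
        have hinner : HasDerivAt (fun r => (E (t1 - r)).transpose.mulVec v)
            ((-(A * E (t1 - s))).transpose.mulVec v +
              (E (t1 - s)).transpose.mulVec 0) s := by
          apply hasDerivAt_mulVec
          · intro i j
            have := expM_entry_hasDerivAt_sub A t1 s j i
            show HasDerivAt (fun r => (E (t1 - r)).transpose i j)
              ((-(A * E (t1 - s))).transpose i j) s
            simpa [Matrix.transpose_apply, Matrix.neg_apply] using this
          · exact hasDerivAt_const s v
        have hinner' : HasDerivAt (fun r => (E (t1 - r)).transpose.mulVec v)
            ((-(A * E (t1 - s))).transpose.mulVec v) s := by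
          simpa [Matrix.mulVec_zero] using hinner
        have houter : HasDerivAt
            (fun r => (A ^ k * B).transpose.mulVec ((E (t1 - r)).transpose.mulVec v))
            ((A ^ k * B).transpose.mulVec ((-(A * E (t1 - s))).transpose.mulVec v)) s := by
          have h := hasDerivAt_mulVec (M := fun _ => (A ^ k * B).transpose)
            (M' := 0) (fun i j => hasDerivAt_const s _) hinner'
          simpa [Matrix.zero_mulVec] using h
        -- but the function is eventually 0 near s
        have hev : (fun r => (A ^ k * B).transpose.mulVec ((E (t1 - r)).transpose.mulVec v))
            =ᶠ[nhds s] fun _ => (0 : Fin m → ℝ) := by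
          filter_upwards [Ioo_mem_nhds hs.1 hs.2] with r hr using ih r hr
        have hzero : HasDerivAt (fun _ : ℝ => (0 : Fin m → ℝ))
            ((A ^ k * B).transpose.mulVec ((-(A * E (t1 - s))).transpose.mulVec v)) s :=
          houter.congr_of_eventuallyEq hev.symm
        have huniq : (A ^ k * B).transpose.mulVec ((-(A * E (t1 - s))).transpose.mulVec v)
            = 0 := hzero.unique (hasDerivAt_const s 0)
        -- rewrite to the (k+1)-st function
        have hm : (A * E (t1 - s)) * (A ^ k * B) = E (t1 - s) * (A ^ (k + 1) * B) := by
          rw [hEdef, commute_expM A (t1 - s), Matrix.mul_assoc, ← Matrix.mul_assoc A (A ^ k) B,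
            ← pow_succ']
        have h1 : (A ^ (k + 1) * B).transpose.mulVec ((E (t1 - s)).transpose.mulVec v)
            = ((E (t1 - s)) * (A ^ (k + 1) * B)).transpose.mulVec v := by
          rw [Matrix.mulVec_mulVec, ← Matrix.transpose_mul]
        have h2 : (A ^ k * B).transpose.mulVec (((A * E (t1 - s))).transpose.mulVec v)
            = ((A * E (t1 - s)) * (A ^ k * B)).transpose.mulVec v := by
          rw [Matrix.mulVec_mulVec, ← Matrix.transpose_mul]
        have hrw : (A ^ (k + 1) * B).transpose.mulVec ((E (t1 - s)).transpose.mulVec v)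
            = -((A ^ k * B).transpose.mulVec ((-(A * E (t1 - s))).transpose.mulVec v)) := by
          rw [Matrix.transpose_neg, Matrix.neg_mulVec, Matrix.mulVec_neg, neg_neg, h1, h2, ← hm]
        rw [hrw, huniq, neg_zero]
    -- evaluate at the midpoint
    have hs0 : (t0 + t1) / 2 ∈ Ioo t0 t1 := ⟨by linarith, by linarith⟩
    set s0 : ℝ := (t0 + t1) / 2
    set w : Fin n → ℝ := (E (t1 - s0)).transpose.mulVec v with hwdef
    have hw : ∀ k : ℕ, (A ^ k * B).transpose.mulVec w = 0 := fun k => hGk k s0 hs0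
    have hw0 : w = 0 := kalman_ker hrank w hw
    -- invertibility of the exponential gives v = 0
    have hv : (E (-(t1 - s0))).transpose.mulVec w = v := by
      rw [hwdef, Matrix.mulVec_mulVec, ← Matrix.transpose_mul, hEdef,
        expM_neg_cancel, Matrix.transpose_one, Matrix.one_mulVec]
    rw [hw0, Matrix.mulVec_zero] at hv
    exact hv.symm
  have hWinj : Function.Injective W := by
    rw [injective_iff_map_eq_zero W] at *
    exact hker
  have hWsurj : Function.Surjective W := LinearMap.injective_iff_surjective.mp hWinj
  obtain ⟨c, hc⟩ := hWsurj (q - (E (t1 - t0)).mulVec p)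
  -- the control and the trajectory
  set u : ℝ → Fin m → ℝ := fun s => B.transpose.mulVec ((E (t1 - s)).transpose.mulVec c)
    with hudef
  have hu_cont : Continuous u := hg_cont c
  set f : ℝ → Fin n → ℝ := fun s => (E (-s)).mulVec (B.mulVec (u s)) with hfdef
  have hf_cont : Continuous f :=
    continuous_mulVec (M := fun s => E (-s)) (fun i j => expM_entry_continuous_neg A i j)
      (continuous_mulVec (M := fun _ => B) (fun i j => continuous_const) hu_cont)
  set x : ℝ → Fin n → ℝ := fun t =>
    (E t).mulVec ((E (-t0)).mulVec p + ∫ s in t0..t, f s) with hxdef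
  refine ⟨u, hu_cont, x, ?_, ?_, ?_⟩
  · -- x t0 = p
    rw [hxdef]
    simp only [intervalIntegral.integral_same, add_zero]
    rw [Matrix.mulVec_mulVec, hEdef, expM_neg_cancel, Matrix.one_mulVec]
  · -- x t1 = q
    have hcomm := (mvCLM (E t1)).intervalIntegral_comp_comm ((hf_cont.intervalIntegrable t0 t1 : IntervalIntegrable f volume t0 t1))
    have hmv : ∀ y : Fin n → ℝ, mvCLM (E t1) y = (E t1).mulVec y := by
      intro y
      simp [mvCLM]
    have hint : (E t1).mulVec (∫ s in t0..t1, f s) = wfun c := by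
      rw [← hmv, ← hcomm]
      apply intervalIntegral.integral_congr
      intro s _
      show (mvCLM (E t1)) (f s) = F c s
      rw [hmv, hfdef, hFdef]
      show (E t1).mulVec ((E (-s)).mulVec (B.mulVec (u s))) = _
      rw [Matrix.mulVec_mulVec, hEdef, expM_add]
      rw [hudef]
      norm_num [sub_eq_add_neg]
      rfl
    rw [hxdef]
    show (E t1).mulVec ((E (-t0)).mulVec p + ∫ s in t0..t1, f s) = q
    rw [Matrix.mulVec_add, hint, Matrix.mulVec_mulVec, hEdef, expM_add]
    have hc' : wfun c = q - (expM A (t1 - t0)).mulVec p := hc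
    rw [hc', ← sub_eq_add_neg]
    abel
  · -- the differential equation
    intro t
    have hy : HasDerivAt (fun r => ∫ s in t0..r, f s) (f t) t :=
      (hf_cont.integral_hasStrictDerivAt t0 t).hasDerivAt
    have hvv : HasDerivAt (fun r => (E (-t0)).mulVec p + ∫ s in t0..r, f s) (f t) t :=
      hy.const_add _
    have hEentry : ∀ i j, HasDerivAt (fun s => E s i j) ((A * E t) i j) t := by
      intro i j
      have := expM_entry_hasDerivAt A 0 1 t i j
      simpa using this
    have hx := hasDerivAt_mulVec hEentry hvv
    have hd1 : (A * E t).mulVec ((E (-t0)).mulVec p + ∫ s in t0..t, f s) =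
        A.mulVec (x t) := by
      rw [hxdef]
      show _ = A.mulVec ((E t).mulVec ((E (-t0)).mulVec p + ∫ s in t0..t, f s))
      rw [Matrix.mulVec_mulVec]
    have hd2 : (E t).mulVec (f t) = B.mulVec (u t) := by
      rw [hfdef]
      show (E t).mulVec ((E (-t)).mulVec (B.mulVec (u t))) = _
      rw [Matrix.mulVec_mulVec, hEdef, expM_neg_cancel, Matrix.one_mulVec]
    rw [hd1, hd2] at hx
    exact hx
end
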